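/- On ℝ² × (0, π) with the metric g given in coordinates (x,y,z) by the matrix [[p²+q², 0, -q],[0, p², 0],[-q, 0, 1]], where p = 4e^y/(16+e^{2y}) and q = -e^{2y}/(16+e^{2y}), the functions f₁ = ((2c₂+λ)/2)(ln(16+e^{2y}) - 2 ln(sin z / (2c₂+λ))) and f₂ = -(1/2)√(-(2c₂+λ)/c₁)(2 ln(sin z) - ln(16+e^{2y})) satisfy Hess f₁ = -c₁ df₂ ⊙ df₂ + c₂ Ric + λ g, provided c₁ < 0 and 2c₂ + λ > 0. -/

import Mathlib

noncomputable section
open scoped BigOperators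

/-- Partial derivative of `f` in direction `i` at `x`. -/
def pd {n : ℕ} (i : Fin n) (f : (Fin n → ℝ) → ℝ) (x : Fin n → ℝ) : ℝ :=
  fderiv ℝ f x (Pi.single i 1)

/-- Christoffel symbols `Γ^k_{ij}` of the metric `g` (given as a matrix field). -/
def christoffel {n : ℕ} (g : (Fin n → ℝ) → Matrix (Fin n) (Fin n) ℝ)
    (k i j : Fin n) (x : Fin n → ℝ) : ℝ :=
  (1 / 2) * ∑ l, (g x)⁻¹ k l *
    (pd i (fun y => g y j l) x + pd j (fun y => g y i l) x - pd l (fun y => g y i j) x)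

/-- Components of the Riemannian Hessian of `f`. -/
def hessian {n : ℕ} (g : (Fin n → ℝ) → Matrix (Fin n) (Fin n) ℝ)
    (f : (Fin n → ℝ) → ℝ) (i j : Fin n) (x : Fin n → ℝ) : ℝ :=
  pd i (pd j f) x - ∑ k, christoffel g k i j x * pd k f x

/-- Components `R^l_{ijk}` of the Riemann curvature tensor. -/
def riemCurv {n : ℕ} (g : (Fin n → ℝ) → Matrix (Fin n) (Fin n) ℝ)
    (l i j k : Fin n) (x : Fin n → ℝ) : ℝ :=
  pd i (christoffel g l j k) x - pd j (christoffel g l i k) x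
    + ∑ m, christoffel g l i m x * christoffel g m j k x
    - ∑ m, christoffel g l j m x * christoffel g m i k x

/-- Components of the Ricci tensor. -/
def ricciT {n : ℕ} (g : (Fin n → ℝ) → Matrix (Fin n) (Fin n) ℝ)
    (j k : Fin n) (x : Fin n → ℝ) : ℝ :=
  ∑ i, riemCurv g i i j k x


lemma pd_uni {n : ℕ} {f : (Fin n → ℝ) → ℝ} {φ : ℝ → ℝ} {d : ℝ} {c i : Fin n} {x : Fin n → ℝ}
    (hf : ∀ y, f y = φ (y c)) (h : HasDerivAt φ d (x c)) :
    pd i f x = if c = i then d else 0 := by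
  have hfe : f = fun y => φ (y c) := funext hf
  subst hfe
  have h1 : HasFDerivAt (fun y : Fin n → ℝ => y c)
      (ContinuousLinearMap.proj c : (Fin n → ℝ) →L[ℝ] ℝ) x :=
    (ContinuousLinearMap.proj (R := ℝ) (φ := fun _ : Fin n => ℝ) c).hasFDerivAt
  have h2 : HasFDerivAt (fun y : Fin n → ℝ => φ (y c)) (d • ContinuousLinearMap.proj c) x :=
    h.comp_hasFDerivAt x h1
  rw [pd, h2.fderiv]
  simp [Pi.single_apply]

lemma pd_const {n : ℕ} {i : Fin n} {x : Fin n → ℝ} (c : ℝ) :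
    pd i (fun _ => c) x = 0 := by
  rw [pd, fderiv_fun_const]
  simp

lemma pd_uni2 {f : (Fin 3 → ℝ) → ℝ} {φ ψ : ℝ → ℝ} {d₁ d₂ : ℝ} {i : Fin 3} {x : Fin 3 → ℝ}
    (hf : ∀ y, f y = φ (y 1) + ψ (y 2))
    (h₁ : HasDerivAt φ d₁ (x 1)) (h₂ : HasDerivAt ψ d₂ (x 2)) :
    pd i f x = (if (1:Fin 3) = i then d₁ else 0) + (if (2:Fin 3) = i then d₂ else 0) := by
  have hfe : f = fun y => φ (y 1) + ψ (y 2) := funext hf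
  subst hfe
  have p1 : HasFDerivAt (fun y : Fin 3 → ℝ => y 1)
      (ContinuousLinearMap.proj 1 : (Fin 3 → ℝ) →L[ℝ] ℝ) x :=
    (ContinuousLinearMap.proj (R := ℝ) (φ := fun _ : Fin 3 => ℝ) 1).hasFDerivAt
  have p2 : HasFDerivAt (fun y : Fin 3 → ℝ => y 2)
      (ContinuousLinearMap.proj 2 : (Fin 3 → ℝ) →L[ℝ] ℝ) x :=
    (ContinuousLinearMap.proj (R := ℝ) (φ := fun _ : Fin 3 => ℝ) 2).hasFDerivAt
  have h : HasFDerivAt (fun y : Fin 3 → ℝ => φ (y 1) + ψ (y 2))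
      (d₁ • ContinuousLinearMap.proj (1 : Fin 3) + d₂ • ContinuousLinearMap.proj (2 : Fin 3)) x :=
    (h₁.comp_hasFDerivAt x p1).add (h₂.comp_hasFDerivAt x p2)
  rw [pd, h.fderiv]
  simp [Pi.single_apply]

def ee (t : ℝ) : ℝ := Real.exp (2 * t)
def dd (t : ℝ) : ℝ := 16 + ee t

lemma ee_pos (t : ℝ) : 0 < ee t := Real.exp_pos _
lemma dd_pos (t : ℝ) : 0 < dd t := by have := ee_pos t; unfold dd; linarith
lemma dd_ne (t : ℝ) : dd t ≠ 0 := ne_of_gt (dd_pos t)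

lemma hasDerivAt_ee (t : ℝ) : HasDerivAt ee (2 * ee t) t := by
  have h : HasDerivAt (fun t : ℝ => 2 * t) 2 t := by
    simpa using (hasDerivAt_id t).const_mul 2
  have := h.exp
  unfold ee
  convert this using 1
  ring

lemma hasDerivAt_dd (t : ℝ) : HasDerivAt dd (2 * ee t) t := by
  have := (hasDerivAt_ee t).const_add 16
  unfold dd
  exact this

lemma hasDerivAt_a (t : ℝ) : HasDerivAt (fun t => ee t / dd t) (32 * ee t / dd t ^ 2) t := by
  have h := (hasDerivAt_ee t).div (hasDerivAt_dd t) (dd_ne t)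
  refine h.congr_deriv (Eq.symm ?_)
  have hd : dd t = 16 + ee t := rfl
  rw [hd]
  have h16 : (16 : ℝ) + ee t ≠ 0 := by have := ee_pos t; linarith
  field_simp
  ring

lemma hasDerivAt_b (t : ℝ) :
    HasDerivAt (fun t => 16 * ee t / dd t ^ 2) (32 * ee t * (16 - ee t) / dd t ^ 3) t := by
  have hsq : HasDerivAt (fun t => dd t ^ 2) (2 * dd t ^ 1 * (2 * ee t)) t :=
    (hasDerivAt_dd t).pow 2
  have h := ((hasDerivAt_ee t).const_mul 16).div hsq (pow_ne_zero 2 (dd_ne t))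
  refine h.congr_deriv (Eq.symm ?_)
  have hd : dd t = 16 + ee t := rfl
  rw [hd]
  have h16 : (16 : ℝ) + ee t ≠ 0 := by have := ee_pos t; linarith
  field_simp
  ring

def Gm : (Fin 3 → ℝ) → Matrix (Fin 3) (Fin 3) ℝ := fun v =>
  !![ee (v 1) / dd (v 1), 0, ee (v 1) / dd (v 1);
     0, 16 * ee (v 1) / dd (v 1) ^ 2, 0;
     ee (v 1) / dd (v 1), 0, 1]

lemma Gm_inv (v : Fin 3 → ℝ) : (Gm v)⁻¹ =
    !![dd (v 1) ^ 2 / (16 * ee (v 1)), 0, -(dd (v 1) / 16);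
       0, dd (v 1) ^ 2 / (16 * ee (v 1)), 0;
       -(dd (v 1) / 16), 0, dd (v 1) / 16] := by
  apply Matrix.inv_eq_right_inv
  have he := ee_pos (v 1)
  have hd : dd (v 1) = 16 + ee (v 1) := rfl
  ext i j
  fin_cases i <;> fin_cases j <;>
    simp [Gm, Matrix.mul_apply, Fin.sum_univ_three, Matrix.one_apply] <;>
    rw [hd] <;> field_simp <;> ring

def dG : Fin 3 → Fin 3 → ℝ → ℝ := fun a b t =>
  !![32 * ee t / dd t ^ 2, 0, 32 * ee t / dd t ^ 2;
     0, 32 * ee t * (16 - ee t) / dd t ^ 3, 0;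
     32 * ee t / dd t ^ 2, 0, 0] a b

lemma pdG (i a b : Fin 3) (v : Fin 3 → ℝ) :
    pd i (fun w => Gm w a b) v = if (1 : Fin 3) = i then dG a b (v 1) else 0 := by
  fin_cases a <;> fin_cases b
  · exact (pd_uni (fun y => by simp [Gm]) (hasDerivAt_a (v 1))).trans (by simp [dG, Matrix.vecHead, Matrix.vecTail])
  · exact (pd_uni (fun y => by simp [Gm]) (hasDerivAt_const (v 1) (0:ℝ))).trans (by simp [dG, Matrix.vecHead, Matrix.vecTail])
  · exact (pd_uni (fun y => by simp [Gm]) (hasDerivAt_a (v 1))).trans (by simp [dG, Matrix.vecHead, Matrix.vecTail])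
  · exact (pd_uni (fun y => by simp [Gm]) (hasDerivAt_const (v 1) (0:ℝ))).trans (by simp [dG, Matrix.vecHead, Matrix.vecTail])
  · exact (pd_uni (fun y => by simp [Gm]) (hasDerivAt_b (v 1))).trans (by simp [dG, Matrix.vecHead, Matrix.vecTail])
  · exact (pd_uni (fun y => by simp [Gm]) (hasDerivAt_const (v 1) (0:ℝ))).trans (by simp [dG, Matrix.vecHead, Matrix.vecTail])
  · exact (pd_uni (fun y => by simp [Gm]) (hasDerivAt_a (v 1))).trans (by simp [dG, Matrix.vecHead, Matrix.vecTail])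
  · exact (pd_uni (fun y => by simp [Gm]) (hasDerivAt_const (v 1) (0:ℝ))).trans (by simp [dG, Matrix.vecHead, Matrix.vecTail])
  · exact (pd_uni (fun y => by simp [Gm]) (hasDerivAt_const (v 1) (1:ℝ))).trans (by simp [dG, Matrix.vecHead, Matrix.vecTail])


def Ga (k i j : Fin 3) (t : ℝ) : ℝ :=
  ![!![0, 16 / dd t, 0; 16 / dd t, 0, 1; 0, 1, 0],
    !![-1, 0, -1; 0, (16 - ee t) / dd t, 0; -1, 0, 0],
    !![0, 0, 0; 0, 0, -(ee t / dd t); 0, -(ee t / dd t), 0]] k i j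

set_option maxHeartbeats 1000000 in
lemma hGamma (k i j : Fin 3) (v : Fin 3 → ℝ) : christoffel Gm k i j v = Ga k i j (v 1) := by
  have he := ee_pos (v 1)
  have hd : dd (v 1) = 16 + ee (v 1) := rfl
  fin_cases k <;> fin_cases i <;> fin_cases j <;>
    (rw [christoffel, Fin.sum_univ_three, Gm_inv]
     simp only [pdG]
     simp [Ga, dG, Matrix.vecHead, Matrix.vecTail]) <;>
    rw [hd] <;> field_simp <;> ring

lemma hasDerivAt_c16 (t : ℝ) : HasDerivAt (fun t => 16 / dd t) (-(32 * ee t / dd t ^ 2)) t := by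
  have h := (hasDerivAt_const t (16:ℝ)).div (hasDerivAt_dd t) (dd_ne t)
  refine h.congr_deriv (Eq.symm ?_)
  ring

lemma hasDerivAt_g11 (t : ℝ) :
    HasDerivAt (fun t => (16 - ee t) / dd t) (-(64 * ee t / dd t ^ 2)) t := by
  have h := ((hasDerivAt_const t (16:ℝ)).sub (hasDerivAt_ee t)).div (hasDerivAt_dd t) (dd_ne t)
  refine h.congr_deriv (Eq.symm ?_)
  simp only [Pi.sub_apply]
  have hd : dd t = 16 + ee t := rfl
  rw [hd]
  have h16 : (16 : ℝ) + ee t ≠ 0 := by have := ee_pos t; linarith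
  field_simp
  ring

lemma hasDerivAt_na (t : ℝ) :
    HasDerivAt (fun t => -(ee t / dd t)) (-(32 * ee t / dd t ^ 2)) t := by
  exact (hasDerivAt_a t).neg

def dGa (k i j : Fin 3) (t : ℝ) : ℝ :=
  ![!![0, -(32 * ee t / dd t ^ 2), 0; -(32 * ee t / dd t ^ 2), 0, 0; 0, 0, 0],
    !![0, 0, 0; 0, -(64 * ee t / dd t ^ 2), 0; 0, 0, 0],
    !![0, 0, 0; 0, 0, -(32 * ee t / dd t ^ 2); 0, -(32 * ee t / dd t ^ 2), 0]] k i j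

set_option maxHeartbeats 1000000 in
lemma pdGamma (i' k i j : Fin 3) (v : Fin 3 → ℝ) :
    pd i' (christoffel Gm k i j) v = if (1 : Fin 3) = i' then dGa k i j (v 1) else 0 := by
  fin_cases k <;> fin_cases i <;> fin_cases j
  · exact (pd_uni (φ := fun _ => (0:ℝ)) (fun y => (hGamma 0 0 0 y).trans (by simp [Ga, Matrix.vecHead, Matrix.vecTail])) (hasDerivAt_const (v 1) (0:ℝ))).trans (by simp [dGa, Matrix.vecHead, Matrix.vecTail])
  · exact (pd_uni (φ := fun t => 16 / dd t) (fun y => (hGamma 0 0 1 y).trans (by simp [Ga, Matrix.vecHead, Matrix.vecTail])) (hasDerivAt_c16 (v 1))).trans (by simp [dGa, Matrix.vecHead, Matrix.vecTail])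
  · exact (pd_uni (φ := fun _ => (0:ℝ)) (fun y => (hGamma 0 0 2 y).trans (by simp [Ga, Matrix.vecHead, Matrix.vecTail])) (hasDerivAt_const (v 1) (0:ℝ))).trans (by simp [dGa, Matrix.vecHead, Matrix.vecTail])
  · exact (pd_uni (φ := fun t => 16 / dd t) (fun y => (hGamma 0 1 0 y).trans (by simp [Ga, Matrix.vecHead, Matrix.vecTail])) (hasDerivAt_c16 (v 1))).trans (by simp [dGa, Matrix.vecHead, Matrix.vecTail])
  · exact (pd_uni (φ := fun _ => (0:ℝ)) (fun y => (hGamma 0 1 1 y).trans (by simp [Ga, Matrix.vecHead, Matrix.vecTail])) (hasDerivAt_const (v 1) (0:ℝ))).trans (by simp [dGa, Matrix.vecHead, Matrix.vecTail])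
  · exact (pd_uni (φ := fun _ => (1:ℝ)) (fun y => (hGamma 0 1 2 y).trans (by simp [Ga, Matrix.vecHead, Matrix.vecTail])) (hasDerivAt_const (v 1) (1:ℝ))).trans (by simp [dGa, Matrix.vecHead, Matrix.vecTail])
  · exact (pd_uni (φ := fun _ => (0:ℝ)) (fun y => (hGamma 0 2 0 y).trans (by simp [Ga, Matrix.vecHead, Matrix.vecTail])) (hasDerivAt_const (v 1) (0:ℝ))).trans (by simp [dGa, Matrix.vecHead, Matrix.vecTail])
  · exact (pd_uni (φ := fun _ => (1:ℝ)) (fun y => (hGamma 0 2 1 y).trans (by simp [Ga, Matrix.vecHead, Matrix.vecTail])) (hasDerivAt_const (v 1) (1:ℝ))).trans (by simp [dGa, Matrix.vecHead, Matrix.vecTail])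
  · exact (pd_uni (φ := fun _ => (0:ℝ)) (fun y => (hGamma 0 2 2 y).trans (by simp [Ga, Matrix.vecHead, Matrix.vecTail])) (hasDerivAt_const (v 1) (0:ℝ))).trans (by simp [dGa, Matrix.vecHead, Matrix.vecTail])
  · exact (pd_uni (φ := fun _ => (-1:ℝ)) (fun y => (hGamma 1 0 0 y).trans (by simp [Ga, Matrix.vecHead, Matrix.vecTail])) (hasDerivAt_const (v 1) (-1:ℝ))).trans (by simp [dGa, Matrix.vecHead, Matrix.vecTail])
  · exact (pd_uni (φ := fun _ => (0:ℝ)) (fun y => (hGamma 1 0 1 y).trans (by simp [Ga, Matrix.vecHead, Matrix.vecTail])) (hasDerivAt_const (v 1) (0:ℝ))).trans (by simp [dGa, Matrix.vecHead, Matrix.vecTail])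
  · exact (pd_uni (φ := fun _ => (-1:ℝ)) (fun y => (hGamma 1 0 2 y).trans (by simp [Ga, Matrix.vecHead, Matrix.vecTail])) (hasDerivAt_const (v 1) (-1:ℝ))).trans (by simp [dGa, Matrix.vecHead, Matrix.vecTail])
  · exact (pd_uni (φ := fun _ => (0:ℝ)) (fun y => (hGamma 1 1 0 y).trans (by simp [Ga, Matrix.vecHead, Matrix.vecTail])) (hasDerivAt_const (v 1) (0:ℝ))).trans (by simp [dGa, Matrix.vecHead, Matrix.vecTail])
  · exact (pd_uni (φ := fun t => (16 - ee t) / dd t) (fun y => (hGamma 1 1 1 y).trans (by simp [Ga, Matrix.vecHead, Matrix.vecTail])) (hasDerivAt_g11 (v 1))).trans (by simp [dGa, Matrix.vecHead, Matrix.vecTail])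
  · exact (pd_uni (φ := fun _ => (0:ℝ)) (fun y => (hGamma 1 1 2 y).trans (by simp [Ga, Matrix.vecHead, Matrix.vecTail])) (hasDerivAt_const (v 1) (0:ℝ))).trans (by simp [dGa, Matrix.vecHead, Matrix.vecTail])
  · exact (pd_uni (φ := fun _ => (-1:ℝ)) (fun y => (hGamma 1 2 0 y).trans (by simp [Ga, Matrix.vecHead, Matrix.vecTail])) (hasDerivAt_const (v 1) (-1:ℝ))).trans (by simp [dGa, Matrix.vecHead, Matrix.vecTail])
  · exact (pd_uni (φ := fun _ => (0:ℝ)) (fun y => (hGamma 1 2 1 y).trans (by simp [Ga, Matrix.vecHead, Matrix.vecTail])) (hasDerivAt_const (v 1) (0:ℝ))).trans (by simp [dGa, Matrix.vecHead, Matrix.vecTail])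
  · exact (pd_uni (φ := fun _ => (0:ℝ)) (fun y => (hGamma 1 2 2 y).trans (by simp [Ga, Matrix.vecHead, Matrix.vecTail])) (hasDerivAt_const (v 1) (0:ℝ))).trans (by simp [dGa, Matrix.vecHead, Matrix.vecTail])
  · exact (pd_uni (φ := fun _ => (0:ℝ)) (fun y => (hGamma 2 0 0 y).trans (by simp [Ga, Matrix.vecHead, Matrix.vecTail])) (hasDerivAt_const (v 1) (0:ℝ))).trans (by simp [dGa, Matrix.vecHead, Matrix.vecTail])
  · exact (pd_uni (φ := fun _ => (0:ℝ)) (fun y => (hGamma 2 0 1 y).trans (by simp [Ga, Matrix.vecHead, Matrix.vecTail])) (hasDerivAt_const (v 1) (0:ℝ))).trans (by simp [dGa, Matrix.vecHead, Matrix.vecTail])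
  · exact (pd_uni (φ := fun _ => (0:ℝ)) (fun y => (hGamma 2 0 2 y).trans (by simp [Ga, Matrix.vecHead, Matrix.vecTail])) (hasDerivAt_const (v 1) (0:ℝ))).trans (by simp [dGa, Matrix.vecHead, Matrix.vecTail])
  · exact (pd_uni (φ := fun _ => (0:ℝ)) (fun y => (hGamma 2 1 0 y).trans (by simp [Ga, Matrix.vecHead, Matrix.vecTail])) (hasDerivAt_const (v 1) (0:ℝ))).trans (by simp [dGa, Matrix.vecHead, Matrix.vecTail])
  · exact (pd_uni (φ := fun _ => (0:ℝ)) (fun y => (hGamma 2 1 1 y).trans (by simp [Ga, Matrix.vecHead, Matrix.vecTail])) (hasDerivAt_const (v 1) (0:ℝ))).trans (by simp [dGa, Matrix.vecHead, Matrix.vecTail])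
  · exact (pd_uni (φ := fun t => -(ee t / dd t)) (fun y => (hGamma 2 1 2 y).trans (by simp [Ga, Matrix.vecHead, Matrix.vecTail])) (hasDerivAt_na (v 1))).trans (by simp [dGa, Matrix.vecHead, Matrix.vecTail])
  · exact (pd_uni (φ := fun _ => (0:ℝ)) (fun y => (hGamma 2 2 0 y).trans (by simp [Ga, Matrix.vecHead, Matrix.vecTail])) (hasDerivAt_const (v 1) (0:ℝ))).trans (by simp [dGa, Matrix.vecHead, Matrix.vecTail])
  · exact (pd_uni (φ := fun t => -(ee t / dd t)) (fun y => (hGamma 2 2 1 y).trans (by simp [Ga, Matrix.vecHead, Matrix.vecTail])) (hasDerivAt_na (v 1))).trans (by simp [dGa, Matrix.vecHead, Matrix.vecTail])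
  · exact (pd_uni (φ := fun _ => (0:ℝ)) (fun y => (hGamma 2 2 2 y).trans (by simp [Ga, Matrix.vecHead, Matrix.vecTail])) (hasDerivAt_const (v 1) (0:ℝ))).trans (by simp [dGa, Matrix.vecHead, Matrix.vecTail])



set_option maxHeartbeats 1000000 in
lemma hRic (j k : Fin 3) (v : Fin 3 → ℝ) : ricciT Gm j k v = 2 * Gm v j k := by
  have he := ee_pos (v 1)
  have hd : dd (v 1) = 16 + ee (v 1) := rfl
  fin_cases j <;> fin_cases k <;>
    (simp only [ricciT, riemCurv, Fin.sum_univ_three, pdGamma, hGamma]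
     simp [Ga, dGa, Gm, Matrix.vecHead, Matrix.vecTail]) <;>
    (try rw [hd]) <;> (try field_simp) <;> (try ring)


lemma pd_congr {n : ℕ} {f h : (Fin n → ℝ) → ℝ} {x : Fin n → ℝ}
    (hev : f =ᶠ[nhds x] h) (i : Fin n) : pd i f x = pd i h x := by
  rw [pd, pd, hev.fderiv_eq]

lemma hasDerivAt_cot (t : ℝ) (hs : Real.sin t ≠ 0) :
    HasDerivAt (fun t => Real.cos t / Real.sin t) (-(1 / Real.sin t ^ 2)) t := by
  have h := (Real.hasDerivAt_cos t).div (Real.hasDerivAt_sin t) hs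
  refine h.congr_deriv (Eq.symm ?_)
  have hp := Real.sin_sq_add_cos_sq t
  field_simp
  linear_combination hp

/-- On `ℝ² × (0, π)` with the Sasakian metric given in coordinates `(x, y, z)` by the
matrix `[[p²+q², 0, -q], [0, p², 0], [-q, 0, 1]]`, where `p = 4e^y/(16+e^{2y})` and
`q = -e^{2y}/(16+e^{2y})`, the functions
`f₁ = ((2c₂+λ)/2)(log(16+e^{2y}) - 2 log(sin z/(2c₂+λ)))` and
`f₂ = -(1/2)√(-(2c₂+λ)/c₁)(2 log(sin z) - log(16+e^{2y}))` satisfy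
`Hess f₁ = -c₁ df₂ ⊙ df₂ + c₂ Ric + λ g`, provided `c₁ < 0` and `2c₂ + λ > 0`. -/
theorem sasakian_example_generalised_ricci_soliton (c₁ c₂ lam : ℝ)
    (hc₁ : c₁ < 0) (hc : 0 < 2 * c₂ + lam)
    (p q : ℝ → ℝ)
    (hp : ∀ y, p y = 4 * Real.exp y / (16 + Real.exp (2 * y)))
    (hq : ∀ y, q y = -Real.exp (2 * y) / (16 + Real.exp (2 * y)))
    (g : (Fin 3 → ℝ) → Matrix (Fin 3) (Fin 3) ℝ)
    (hg : ∀ x, g x = !![p (x 1) ^ 2 + q (x 1) ^ 2, 0, -q (x 1);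
                        0, p (x 1) ^ 2, 0;
                        -q (x 1), 0, 1])
    (f₁ f₂ : (Fin 3 → ℝ) → ℝ)
    (hf₁ : ∀ x, f₁ x = (2 * c₂ + lam) / 2 *
      (Real.log (16 + Real.exp (2 * x 1)) - 2 * Real.log (Real.sin (x 2) / (2 * c₂ + lam))))
    (hf₂ : ∀ x, f₂ x = -(1 / 2) * Real.sqrt (-(2 * c₂ + lam) / c₁) *
      (2 * Real.log (Real.sin (x 2)) - Real.log (16 + Real.exp (2 * x 1)))) :
    ∀ x : Fin 3 → ℝ, 0 < x 2 → x 2 < Real.pi → ∀ i j : Fin 3,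
      hessian g f₁ i j x =
        -c₁ * (pd i f₂ x * pd j f₂ x) + c₂ * ricciT g i j x + lam * g x i j := by
  intro x hz0 hzπ i j
  set C := 2 * c₂ + lam with hC
  set s := Real.sqrt (-(2 * c₂ + lam) / c₁) with hsdef
  -- g = Gm
  have hgf : g = Gm := by
    funext v
    rw [hg]
    have he := ee_pos (v 1)
    have hex : ee (v 1) = Real.exp (v 1) * Real.exp (v 1) := by
      rw [ee, two_mul, Real.exp_add]
    have hd : dd (v 1) = 16 + Real.exp (2 * v 1) := rfl
    have h16 : (16 : ℝ) + Real.exp (2 * v 1) ≠ 0 := by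
      have : ee (v 1) = Real.exp (2 * v 1) := rfl
      rw [← this]; linarith
    ext a b
    fin_cases a <;> fin_cases b <;>
      simp [Gm, hp, hq, Matrix.vecHead, Matrix.vecTail] <;>
      rw [← hd] <;>
      simp only [show Real.exp (2 * v 1) = ee (v 1) from rfl,
        show dd (v 1) = 16 + ee (v 1) from rfl] <;>
      (try rw [hex]) <;> field_simp <;> ring
  subst hgf
  have hCne : C ≠ 0 := ne_of_gt hc
  have hc₁ne : c₁ ≠ 0 := ne_of_lt hc₁
  have hnn : 0 ≤ -(2 * c₂ + lam) / c₁ := by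
    rw [div_nonneg_iff]; right; constructor <;> linarith
  have hss : s * s = -C / c₁ := by
    rw [hsdef, Real.mul_self_sqrt hnn, hC]
  have hφ₁ : ∀ t : ℝ, HasDerivAt (fun t => C / 2 * Real.log (dd t)) (C * (ee t / dd t)) t := by
    intro t
    have h := ((hasDerivAt_dd t).log (dd_ne t)).const_mul (C / 2)
    refine h.congr_deriv (Eq.symm ?_)
    field_simp
  have hψ₁ : ∀ t : ℝ, 0 < Real.sin t →
      HasDerivAt (fun t => -C * Real.log (Real.sin t / C))
        (-C * (Real.cos t / Real.sin t)) t := by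
    intro t hst
    have hsC : Real.sin t / C ≠ 0 := div_ne_zero (ne_of_gt hst) hCne
    have h := (((Real.hasDerivAt_sin t).div_const C).log hsC).const_mul (-C)
    refine h.congr_deriv (Eq.symm ?_)
    field_simp
  have hpdf₁ : ∀ v : Fin 3 → ℝ, 0 < v 2 → v 2 < Real.pi → ∀ i : Fin 3, pd i f₁ v =
      (if (1 : Fin 3) = i then C * (ee (v 1) / dd (v 1)) else 0) +
      (if (2 : Fin 3) = i then -C * (Real.cos (v 2) / Real.sin (v 2)) else 0) := by
    intro v h1 h2 i
    have hsin : 0 < Real.sin (v 2) := Real.sin_pos_of_pos_of_lt_pi h1 h2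
    exact pd_uni2 (fun y => by
        rw [hf₁, show (16 : ℝ) + Real.exp (2 * y 1) = dd (y 1) from rfl]; ring)
      (hφ₁ (v 1)) (hψ₁ (v 2) hsin)
  have hφ₂ : ∀ t : ℝ, HasDerivAt (fun t => s / 2 * Real.log (dd t)) (s * (ee t / dd t)) t := by
    intro t
    have h := ((hasDerivAt_dd t).log (dd_ne t)).const_mul (s / 2)
    refine h.congr_deriv (Eq.symm ?_)
    field_simp
  have hψ₂ : ∀ t : ℝ, 0 < Real.sin t →
      HasDerivAt (fun t => -s * Real.log (Real.sin t))
        (s * (-(Real.cos t / Real.sin t))) t := by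
    intro t hst
    have h := ((Real.hasDerivAt_sin t).log (ne_of_gt hst)).const_mul (-s)
    refine h.congr_deriv (Eq.symm ?_)
    field_simp
  have hpdf₂ : ∀ v : Fin 3 → ℝ, 0 < v 2 → v 2 < Real.pi → ∀ i : Fin 3, pd i f₂ v =
      (if (1 : Fin 3) = i then s * (ee (v 1) / dd (v 1)) else 0) +
      (if (2 : Fin 3) = i then s * (-(Real.cos (v 2) / Real.sin (v 2))) else 0) := by
    intro v h1 h2 i
    have hsin : 0 < Real.sin (v 2) := Real.sin_pos_of_pos_of_lt_pi h1 h2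
    exact pd_uni2 (fun y => by
        rw [hf₂, show (16 : ℝ) + Real.exp (2 * y 1) = dd (y 1) from rfl]; ring)
      (hφ₂ (v 1)) (hψ₂ (v 2) hsin)
  have hU : ((fun v : Fin 3 → ℝ => v 2) ⁻¹' Set.Ioo 0 Real.pi) ∈ nhds x :=
    (isOpen_Ioo.preimage (continuous_apply (2 : Fin 3))).mem_nhds ⟨hz0, hzπ⟩
  have hpp0 : ∀ i : Fin 3, pd i (pd 0 f₁) x = 0 := by
    intro i
    have hev : pd (0 : Fin 3) f₁ =ᶠ[nhds x] fun _ => (0 : ℝ) :=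
      Filter.eventuallyEq_of_mem hU (fun v hv => by
        rw [hpdf₁ v hv.1 hv.2 0, if_neg (by decide), if_neg (by decide)]; norm_num)
    rw [pd_congr hev i, pd_const]
  have hpp1 : ∀ i : Fin 3, pd i (pd 1 f₁) x =
      if (1 : Fin 3) = i then C * (32 * ee (x 1) / dd (x 1) ^ 2) else 0 := by
    intro i
    have hev : pd (1 : Fin 3) f₁ =ᶠ[nhds x] fun v => C * (ee (v 1) / dd (v 1)) :=
      Filter.eventuallyEq_of_mem hU (fun v hv => by
        rw [hpdf₁ v hv.1 hv.2 1, if_pos rfl, if_neg (by decide), add_zero])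
    rw [pd_congr hev i]
    exact pd_uni (fun y => rfl) ((hasDerivAt_a (x 1)).const_mul C)
  have hpp2 : ∀ i : Fin 3, pd i (pd 2 f₁) x =
      if (2 : Fin 3) = i then -C * (-(1 / Real.sin (x 2) ^ 2)) else 0 := by
    intro i
    have hev : pd (2 : Fin 3) f₁ =ᶠ[nhds x] fun v => -C * (Real.cos (v 2) / Real.sin (v 2)) :=
      Filter.eventuallyEq_of_mem hU (fun v hv => by
        rw [hpdf₁ v hv.1 hv.2 2, if_neg (by decide), if_pos rfl, zero_add])
    rw [pd_congr hev i]
    exact pd_uni (fun y => rfl)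
      ((hasDerivAt_cot (x 2) (ne_of_gt (Real.sin_pos_of_pos_of_lt_pi hz0 hzπ))).const_mul (-C))
  have hsin : 0 < Real.sin (x 2) := Real.sin_pos_of_pos_of_lt_pi hz0 hzπ
  have hsne : Real.sin (x 2) ≠ 0 := ne_of_gt hsin
  have hpyth := Real.sin_sq_add_cos_sq (x 2)
  have he := ee_pos (x 1)
  have hdd := dd_pos (x 1)
  have hd : dd (x 1) = 16 + ee (x 1) := rfl
  have hprod : ∀ A B : ℝ, -c₁ * (s * A * (s * B)) = C * (A * B) := by
    intro A B
    have h2 : -c₁ * (s * A * (s * B)) = -c₁ * (s * s) * (A * B) := by ring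
    rw [h2, hss]; field_simp
  rw [hessian, Fin.sum_univ_three]
  simp only [hpdf₁ x hz0 hzπ, hpdf₂ x hz0 hzπ, hGamma, hRic]
  have hgoalA : C * (ee (x 1) / dd (x 1)) =
      c₂ * (2 * (ee (x 1) / dd (x 1))) + lam * (ee (x 1) / dd (x 1)) := by
    linear_combination (ee (x 1) / dd (x 1)) * hC
  fin_cases i <;> fin_cases j <;>
    simp [hpp0, hpp1, hpp2, Ga, Gm, Matrix.vecHead, Matrix.vecTail]
  · exact hgoalA
  · exact hgoalA
  · linear_combination (-1 : ℝ) * hprod (ee (x 1) / dd (x 1)) (ee (x 1) / dd (x 1)) +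
      (16 * ee (x 1) / dd (x 1) ^ 2) * hC
  · linear_combination hprod (ee (x 1) / dd (x 1)) (Real.cos (x 2) / Real.sin (x 2))
  · exact hgoalA
  · linear_combination hprod (Real.cos (x 2) / Real.sin (x 2)) (ee (x 1) / dd (x 1))
  · have h1 : Real.sin (x 2) ^ 2 * (Real.sin (x 2) ^ 2)⁻¹ = 1 :=
      mul_inv_cancel₀ (pow_ne_zero 2 hsne)
    linear_combination (-1 : ℝ) * hprod (Real.cos (x 2) / Real.sin (x 2)) (Real.cos (x 2) / Real.sin (x 2)) +
      hC + (-(C / Real.sin (x 2) ^ 2)) * hpyth + (2 * c₂ + lam) * h1
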